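/- Let K_G = ((ω−1)/ω)·J − A_G where J is the all-ones matrix and ω the clique number of G. Then xᵀ K_G x ≥ 0 for every vector x with nonnegative entries. -/
import Mathlib


open Matrix Finset SimpleGraph

variable {V : Type*} [Fintype V] [DecidableEq V]

set_option linter.unusedSectionVars false

lemma adjH (G : SimpleGraph V) [DecidableRel G.Adj] : (G.adjMatrix ℝ).IsHermitian := by
  unfold Matrix.IsHermitian
  rw [conjTranspose_eq_transpose_of_trivial]
  exact G.transpose_adjMatrix

/-- `graphEig G k` : the (k+1)-st largest eigenvalue (with multiplicity) of the adjacency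
matrix of `G`. -/
noncomputable def graphEig (G : SimpleGraph V) [DecidableRel G.Adj] (k : ℕ) : ℝ :=
  ((Finset.univ.val.map (adjH G).eigenvalues).sort (· ≥ ·)).getD k 0

-- shift lemma: quadratic form after moving weight
lemma shift_step (G : SimpleGraph V) [DecidableRel G.Adj] (x : V → ℝ) (i j : V)
    (hij : i ≠ j) (hadj : ¬ G.Adj i j) (hxj : 0 ≤ x j)
    (hle : ((G.adjMatrix ℝ) *ᵥ x) j ≤ ((G.adjMatrix ℝ) *ᵥ x) i) :
    x ⬝ᵥ ((G.adjMatrix ℝ) *ᵥ x) ≤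
      (x + x j • (Pi.single i 1 - Pi.single j 1)) ⬝ᵥ
        ((G.adjMatrix ℝ) *ᵥ (x + x j • (Pi.single i 1 - Pi.single j 1))) := by
  set A := G.adjMatrix ℝ with hA
  set δ : V → ℝ := Pi.single i 1 - Pi.single j 1 with hδ
  have hsym : ∀ v w : V → ℝ, v ⬝ᵥ (A *ᵥ w) = w ⬝ᵥ (A *ᵥ v) := by
    intro v w
    rw [dotProduct_mulVec, ← mulVec_transpose, hA, G.transpose_adjMatrix, dotProduct_comm]
  have hδA : δ ⬝ᵥ (A *ᵥ x) = (A *ᵥ x) i - (A *ᵥ x) j := by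
    simp [hδ, sub_dotProduct, single_dotProduct]
  have hδδ : δ ⬝ᵥ (A *ᵥ δ) = 0 := by
    have : A *ᵥ δ = (fun k => A k i - A k j) := by
      funext k
      simp [hδ, mulVec_sub, mulVec_single, Pi.single_apply]
    rw [this]
    simp only [hδ, sub_dotProduct, single_dotProduct, one_mul]
    have h1 : A i i = 0 := by simp [hA]
    have h2 : A j j = 0 := by simp [hA]
    have h3 : A i j = 0 := by simp [hA, hadj]
    have h4 : A j i = 0 := by
      simp only [hA, adjMatrix_apply, ite_eq_right_iff]
      intro h; exact absurd h.symm hadj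
    ring_nf
    rw [h1, h2, h3, h4]; ring
  have expand : (x + x j • δ) ⬝ᵥ (A *ᵥ (x + x j • δ)) =
      x ⬝ᵥ (A *ᵥ x) + 2 * x j * (δ ⬝ᵥ (A *ᵥ x)) + x j ^2 * (δ ⬝ᵥ (A *ᵥ δ)) := by
    simp only [mulVec_add, mulVec_smul, add_dotProduct, dotProduct_add, smul_dotProduct,
      dotProduct_smul, hsym x δ, smul_eq_mul]
    ring
  rw [expand, hδδ, hδA]
  nlinarith [mul_nonneg hxj (sub_nonneg.mpr hle)]

lemma clique_case (G : SimpleGraph V) [DecidableRel G.Adj] (hω : 1 ≤ G.cliqueNum)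
    (x : V → ℝ) (hx : ∀ i, 0 ≤ x i)
    (hcl : ∀ i j, x i ≠ 0 → x j ≠ 0 → i ≠ j → G.Adj i j) :
    x ⬝ᵥ ((G.adjMatrix ℝ) *ᵥ x) ≤ (1 - 1/(G.cliqueNum : ℝ)) * (∑ i, x i)^2 := by
  set s : Finset V := Finset.univ.filter (fun i => x i ≠ 0) with hs
  have hmem : ∀ i, i ∈ s ↔ x i ≠ 0 := by intro i; simp [hs]
  have hclique : G.IsClique ↑s := by
    intro a ha b hb hab
    exact hcl a b ((hmem a).1 ha) ((hmem b).1 hb) hab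
  have hcard : s.card ≤ G.cliqueNum :=
    SimpleGraph.IsClique.card_le_cliqueNum (tc := hclique)
  have hsum : ∑ i, x i = ∑ i ∈ s, x i := by
    refine (Finset.sum_subset (Finset.subset_univ s) ?_).symm
    intro i _ hi
    by_contra h; exact hi ((hmem i).2 h)
  have hf : x ⬝ᵥ ((G.adjMatrix ℝ) *ᵥ x)
      = (∑ i ∈ s, x i)^2 - ∑ i ∈ s, (x i)^2 := by
    have e1 : x ⬝ᵥ ((G.adjMatrix ℝ) *ᵥ x)
        = ∑ i, ∑ j, x i * ((G.adjMatrix ℝ) i j * x j) := by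
      simp [dotProduct, mulVec, Finset.mul_sum]
    have e2 : ∑ i, ∑ j, x i * ((G.adjMatrix ℝ) i j * x j)
        = ∑ i ∈ s, ∑ j ∈ s, x i * ((G.adjMatrix ℝ) i j * x j) := by
      rw [← Finset.sum_subset (Finset.subset_univ s) (fun i _ hi => by
        have : x i = 0 := by by_contra h; exact hi ((hmem i).2 h)
        simp [this])]
      refine Finset.sum_congr rfl fun i _ => ?_
      rw [← Finset.sum_subset (Finset.subset_univ s) (fun j _ hj => by
        have : x j = 0 := by by_contra h; exact hj ((hmem j).2 h)
        simp [this])]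
    have e3 : ∀ i ∈ s, ∀ j ∈ s,
        x i * ((G.adjMatrix ℝ) i j * x j) = x i * x j - (if i = j then x i * x j else 0) := by
      intro i hi j hj
      by_cases hij : i = j
      · subst hij; simp
      · rw [adjMatrix_apply, if_pos (hcl i j ((hmem i).1 hi) ((hmem j).1 hj) hij), if_neg hij]
        ring
    rw [e1, e2, Finset.sum_congr rfl fun i hi => Finset.sum_congr rfl fun j hj => e3 i hi j hj]
    simp only [Finset.sum_sub_distrib]
    rw [sq, Finset.sum_mul_sum]
    congr 1
    rw [Finset.sum_congr rfl fun i (hi : i ∈ s) => Finset.sum_ite_eq s i (fun j => x i * x j)]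
    refine Finset.sum_congr rfl fun i hi => ?_
    rw [if_pos hi, sq]
  rw [hf, hsum]
  set S := ∑ i ∈ s, x i
  set Q := ∑ i ∈ s, (x i)^2 with hQ
  have hQ0 : 0 ≤ Q := Finset.sum_nonneg fun i _ => sq_nonneg _
  have hCS : S^2 ≤ (s.card : ℝ) * Q := by
    exact sq_sum_le_card_mul_sum_sq (s := s) (f := x)
  have hω' : (1:ℝ) ≤ (G.cliqueNum : ℝ) := by exact_mod_cast hω
  have h1 : S^2 ≤ (G.cliqueNum : ℝ) * Q := by
    refine hCS.trans (mul_le_mul_of_nonneg_right ?_ hQ0)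
    exact_mod_cast hcard
  have hωpos : (0:ℝ) < (G.cliqueNum : ℝ) := by linarith
  have : S^2 / (G.cliqueNum : ℝ) ≤ Q := by
    rw [div_le_iff₀ hωpos]; nlinarith
  have heq : (1 - 1/(G.cliqueNum : ℝ)) * S^2 = S^2 - S^2 / (G.cliqueNum : ℝ) := by ring
  linarith [heq]

lemma MS (G : SimpleGraph V) [DecidableRel G.Adj] (hω : 1 ≤ G.cliqueNum) :
    ∀ (n : ℕ) (x : V → ℝ), (∀ i, 0 ≤ x i) →
      (Finset.univ.filter (fun i => x i ≠ 0)).card ≤ n →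
      x ⬝ᵥ ((G.adjMatrix ℝ) *ᵥ x) ≤ (1 - 1/(G.cliqueNum : ℝ)) * (∑ i, x i)^2 := by
  intro n
  induction n with
  | zero =>
    intro x hx hc
    refine clique_case G hω x hx fun i j hxi _ _ => absurd ?_ hxi
    have : i ∉ Finset.univ.filter (fun i => x i ≠ 0) := by
      intro h
      have := Finset.card_pos.mpr ⟨i, h⟩
      omega
    simpa using this
  | succ n ih =>
    intro x hx hc
    by_cases hcl : ∀ i j, x i ≠ 0 → x j ≠ 0 → i ≠ j → G.Adj i j
    · exact clique_case G hω x hx hcl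
    · push_neg at hcl
      obtain ⟨i, j, hxi, hxj, hij, hadj⟩ := hcl
      -- WLOG (A *ᵥ x) j ≤ (A *ᵥ x) i
      have key : ∀ i j : V, x i ≠ 0 → x j ≠ 0 → i ≠ j → ¬ G.Adj i j →
          ((G.adjMatrix ℝ) *ᵥ x) j ≤ ((G.adjMatrix ℝ) *ᵥ x) i →
          x ⬝ᵥ ((G.adjMatrix ℝ) *ᵥ x) ≤ (1 - 1/(G.cliqueNum : ℝ)) * (∑ v, x v)^2 := by
        intro i j hxi hxj hij hadj hle
        set y : V → ℝ := x + x j • (Pi.single i 1 - Pi.single j 1) with hy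
        have hyv : ∀ v, y v = if v = j then 0 else if v = i then x i + x j else x v := by
          intro v
          rcases eq_or_ne v j with h1 | h1
          · subst h1; simp [hy, Pi.single_apply, hij.symm]
          · rcases eq_or_ne v i with h2 | h2
            · subst h2; simp [hy, Pi.single_apply, hij, h1]
            · simp [hy, Pi.single_apply, h1, h2]
        have hynn : ∀ v, 0 ≤ y v := by
          intro v
          rw [hyv v]
          split
          · exact le_refl 0
          · split
            · exact add_nonneg (hx i) (hx j)
            · exact hx v
        have hysum : ∑ v, y v = ∑ v, x v := by
          simp only [hy, Pi.add_apply, Pi.smul_apply, Pi.sub_apply, smul_eq_mul,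
            Finset.sum_add_distrib, Pi.single_apply, Finset.sum_sub_distrib,
            Finset.sum_ite_eq', Finset.mem_univ, if_pos]
          simp [mul_sub, Finset.sum_sub_distrib, mul_ite, mul_one, mul_zero,
            Finset.sum_ite_eq']
        have hjmem : j ∈ Finset.univ.filter (fun v => x v ≠ 0) := by
          simp [hxj]
        have hsub : Finset.univ.filter (fun v => y v ≠ 0) ⊆
            (Finset.univ.filter (fun v => x v ≠ 0)).erase j := by
          intro v hv
          simp only [Finset.mem_filter, Finset.mem_univ, true_and] at hv
          rw [hyv v] at hv
          rcases eq_or_ne v j with h1 | h1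
          · rw [if_pos h1] at hv; exact absurd rfl hv
          · rw [if_neg h1] at hv
            refine Finset.mem_erase.mpr ⟨h1, ?_⟩
            rcases eq_or_ne v i with h2 | h2
            · subst h2; simp [hxi]
            · rw [if_neg h2] at hv; simp [hv]
        have hcy : (Finset.univ.filter (fun v => y v ≠ 0)).card ≤ n := by
          have h := Finset.card_le_card hsub
          rw [Finset.card_erase_of_mem hjmem] at h
          have := Finset.card_pos.mpr ⟨j, hjmem⟩
          omega
        calc x ⬝ᵥ ((G.adjMatrix ℝ) *ᵥ x) ≤ y ⬝ᵥ ((G.adjMatrix ℝ) *ᵥ y) :=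
              shift_step G x i j hij hadj (hx j) hle
          _ ≤ (1 - 1/(G.cliqueNum : ℝ)) * (∑ v, y v)^2 := ih y hynn hcy
          _ = (1 - 1/(G.cliqueNum : ℝ)) * (∑ v, x v)^2 := by rw [hysum]
      rcases le_total (((G.adjMatrix ℝ) *ᵥ x) j) (((G.adjMatrix ℝ) *ᵥ x) i) with h | h
      · exact key i j hxi hxj hij hadj h
      · exact key j i hxj hxi hij.symm (fun hadj' => hadj hadj'.symm) h

theorem K_matrix_nonneg_on_nonneg (G : SimpleGraph V) [DecidableRel G.Adj]
    (hω : 1 ≤ G.cliqueNum)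
    (K : Matrix V V ℝ)
    (hK : K = (((G.cliqueNum : ℝ) - 1) / (G.cliqueNum : ℝ)) • (Matrix.of fun _ _ => (1 : ℝ))
        - G.adjMatrix ℝ)
    (x : V → ℝ) (hx : ∀ i, 0 ≤ x i) :
    0 ≤ x ⬝ᵥ (K *ᵥ x) := by
  subst hK
  rw [sub_mulVec, dotProduct_sub, smul_mulVec, dotProduct_smul, smul_eq_mul]
  have hJ : x ⬝ᵥ ((Matrix.of fun _ _ => (1:ℝ)) *ᵥ x) = (∑ v, x v)^2 := by
    simp only [dotProduct, mulVec, Matrix.of_apply, one_mul, sq]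
    rw [← Finset.sum_mul]

  rw [hJ]
  have hω' : (1:ℝ) ≤ (G.cliqueNum : ℝ) := by exact_mod_cast hω
  have hωne : (G.cliqueNum : ℝ) ≠ 0 := by linarith
  have hc : ((G.cliqueNum : ℝ) - 1) / (G.cliqueNum : ℝ) = 1 - 1/(G.cliqueNum : ℝ) := by
    field_simp
  have hMS := MS G hω (Finset.univ.filter (fun i => x i ≠ 0)).card x hx (le_refl _)
  rw [hc]
  linarith
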